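/- (Lemma: the Markov approximation is less capable.) Let 𝒮, 𝒮′, 𝒳 be finite sets, let κ be a channel from 𝒮 to 𝒳, let f : 𝒮 → 𝒮′, and let p be a probability distribution on 𝒮 with full support. Define the Markov-approximation channel κ′ from 𝒮 to 𝒳 by κ′ x s := ( ∑_{s' : f(s')=f(s)} p s' · κ x s' ) / ( ∑_{s' : f(s')=f(s)} p s' ). Then the mutual informations satisfy I(p, κ′) ≤ I(p, κ). -/
import Mathlib

open Finset


/-- A probability distribution on a finite set. -/
def IsDist {S : Type} [Fintype S] (p : S → ℝ) : Prop :=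
  (∀ s, 0 ≤ p s) ∧ ∑ s, p s = 1

/-- A channel from `S` to `X`: a column-stochastic matrix. -/
def IsChannel {S X : Type} [Fintype S] [Fintype X] (κ : X → S → ℝ) : Prop :=
  (∀ x s, 0 ≤ κ x s) ∧ ∀ s, ∑ x, κ x s = 1

/-- `κ₁` is a garbling of `κ₂` (the Blackwell order `κ₁ ⪯ κ₂`). -/
def IsGarbling {S X₁ X₂ : Type} [Fintype S] [Fintype X₁] [Fintype X₂]
    (κ₁ : X₁ → S → ℝ) (κ₂ : X₂ → S → ℝ) : Prop :=
  ∃ lam : X₁ → X₂ → ℝ, IsChannel lam ∧ ∀ x₁ s, κ₁ x₁ s = ∑ x₂, lam x₁ x₂ * κ₂ x₂ s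

/-- Optimal expected utility: maximum over decision rules `d : X → A`. -/
noncomputable def optUtility {S X A : Type} [Fintype S] [Fintype X] [Fintype A]
    (p : S → ℝ) (u : A × S → ℝ) (κ : X → S → ℝ) : ℝ :=
  ⨆ d : X → A, ∑ s, ∑ x, p s * κ x s * u (d x, s)

/-- Mutual information between input (with distribution `p`) and output of channel `κ`;
terms with `κ x s = 0` are taken to be `0`. -/
noncomputable def mutualInfo {S X : Type} [Fintype S] [Fintype X]
    (p : S → ℝ) (κ : X → S → ℝ) : ℝ :=
  ∑ s, ∑ x, if κ x s = 0 then 0 else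
    p s * κ x s * Real.log (κ x s / ∑ s', p s' * κ x s')

/-- Channel composition: `(κ·λ) x s = ∑ t, κ x t * λ t s`. -/
def chanComp {S T X : Type} [Fintype S] [Fintype T] [Fintype X]
    (κ : X → T → ℝ) (lam : T → S → ℝ) : X → S → ℝ :=
  fun x s => ∑ t, κ x t * lam t s

/-- Marginal on `S` of a joint distribution on `S × X₁ × X₂`. -/
noncomputable def margS3 {S X₁ X₂ : Type} [Fintype S] [Fintype X₁] [Fintype X₂]
    (P : S × X₁ × X₂ → ℝ) (s : S) : ℝ := ∑ x₁, ∑ x₂, P (s, x₁, x₂)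

/-- The channel `X₁ ← S` of conditional probabilities `P(X₁ = x₁ | S = s)`. -/
noncomputable def chan1of3 {S X₁ X₂ : Type} [Fintype S] [Fintype X₁] [Fintype X₂]
    (P : S × X₁ × X₂ → ℝ) (x₁ : X₁) (s : S) : ℝ :=
  (∑ x₂, P (s, x₁, x₂)) / margS3 P s

/-- The channel `X₂ ← S` of conditional probabilities `P(X₂ = x₂ | S = s)`. -/
noncomputable def chan2of3 {S X₁ X₂ : Type} [Fintype S] [Fintype X₁] [Fintype X₂]
    (P : S × X₁ × X₂ → ℝ) (x₂ : X₂) (s : S) : ℝ :=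
  (∑ x₁, P (s, x₁, x₂)) / margS3 P s

/-- Pushforward of a joint distribution on `S × X₁ × X₂` along `f : S → S'`. -/
noncomputable def push3 {S S' X₁ X₂ : Type} [Fintype S] [Fintype X₁] [Fintype X₂]
    [DecidableEq S'] (f : S → S') (P : S × X₁ × X₂ → ℝ) : S' × X₁ × X₂ → ℝ :=
  fun q => ∑ s ∈ Finset.univ.filter (fun s => f s = q.1), P (s, q.2.1, q.2.2)


-- Jensen helper
lemma jensen_mul_log {S : Type} (B : Finset S) (w z : S → ℝ)
    (hw : ∀ s ∈ B, 0 < w s) (hz : ∀ s ∈ B, 0 ≤ z s) :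
    (∑ s ∈ B, w s) * ((∑ s ∈ B, w s * z s) / (∑ s ∈ B, w s) *
      Real.log ((∑ s ∈ B, w s * z s) / (∑ s ∈ B, w s)))
      ≤ ∑ s ∈ B, w s * (z s * Real.log (z s)) := by
  rcases B.eq_empty_or_nonempty with h | h
  · simp [h]
  have hD : 0 < ∑ s ∈ B, w s := Finset.sum_pos hw h
  have h1 : ∑ s ∈ B, w s / (∑ s ∈ B, w s) = 1 := by
    rw [← Finset.sum_div, div_self hD.ne']
  have hJ := Real.convexOn_mul_log.map_sum_le (t := B)
    (w := fun s => w s / (∑ s ∈ B, w s)) (p := z)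
    (fun s hs => div_nonneg (hw s hs).le hD.le) h1
    (fun s hs => hz s hs)
  simp only [smul_eq_mul] at hJ
  have heq : ∑ s ∈ B, w s / (∑ s ∈ B, w s) * z s = (∑ s ∈ B, w s * z s) / (∑ s ∈ B, w s) := by
    simp only [div_mul_eq_mul_div, ← Finset.sum_div]
  rw [heq] at hJ
  calc (∑ s ∈ B, w s) * ((∑ s ∈ B, w s * z s) / (∑ s ∈ B, w s) *
        Real.log ((∑ s ∈ B, w s * z s) / (∑ s ∈ B, w s)))
      ≤ (∑ s ∈ B, w s) * ∑ s ∈ B, w s / (∑ s ∈ B, w s) * (z s * Real.log (z s)) := by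
        apply mul_le_mul_of_nonneg_left hJ hD.le
    _ = ∑ s ∈ B, w s * (z s * Real.log (z s)) := by
        rw [Finset.mul_sum]; congr 1; ext s; field_simp

lemma mi_rewrite {S X : Type} [Fintype S] [Fintype X]
    (p : S → ℝ) (κ : X → S → ℝ) (hfull : ∀ s, 0 < p s) (hκ : ∀ x s, 0 ≤ κ x s) :
    (∑ s, ∑ x, if κ x s = 0 then 0 else
      p s * κ x s * Real.log (κ x s / ∑ s', p s' * κ x s'))
    = ∑ x, ((∑ s, p s * (κ x s * Real.log (κ x s)))
        - (∑ s, p s * κ x s) * Real.log (∑ s, p s * κ x s)) := by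
  rw [Finset.sum_comm]
  apply Finset.sum_congr rfl
  intro x _
  set q := ∑ s', p s' * κ x s' with hq
  rcases eq_or_lt_of_le (Finset.sum_nonneg (fun s _ => mul_nonneg (hfull s).le (hκ x s)))
    with h0 | hpos
  · -- q = 0, so each κ x s = 0
    have hz : ∀ s ∈ Finset.univ, κ x s = 0 := by
      intro s _
      have := (Finset.sum_eq_zero_iff_of_nonneg
        (fun s _ => mul_nonneg (hfull s).le (hκ x s))).1 h0.symm s (Finset.mem_univ s)
      exact (mul_eq_zero.1 this).resolve_left (hfull s).ne'
    have l : (∑ s, if κ x s = 0 then 0 else p s * κ x s * Real.log (κ x s / q)) = 0 :=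
      Finset.sum_eq_zero (fun s _ => by rw [hz s (Finset.mem_univ s)]; simp)
    have r : (∑ s, p s * (κ x s * Real.log (κ x s))) = 0 :=
      Finset.sum_eq_zero (fun s _ => by rw [hz s (Finset.mem_univ s)]; simp)
    have hq0 : q = 0 := by rw [hq, ← h0]
    rw [l, r, hq0]
    simp
  · have hsum : ∑ s, (if κ x s = 0 then 0 else p s * κ x s * Real.log (κ x s / q))
        = ∑ s, (p s * (κ x s * Real.log (κ x s)) - p s * κ x s * Real.log q) := by
      apply Finset.sum_congr rfl
      intro s _
      by_cases h : κ x s = 0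
      · simp [h]
      · rw [if_neg h, Real.log_div h hpos.ne']; ring
    rw [hsum, Finset.sum_sub_distrib]
    congr 1
    rw [← Finset.sum_mul]

lemma key_step {S S' X : Type} [Fintype S] [Fintype S'] [Fintype X] [DecidableEq S']
    (κ : X → S → ℝ) (hκ : ∀ x s, 0 ≤ κ x s) (f : S → S')
    (p : S → ℝ) (hfull : ∀ s, 0 < p s)
    (κ' : X → S → ℝ)
    (hκ' : ∀ x s, κ' x s =
      (∑ s' ∈ Finset.univ.filter (fun s' => f s' = f s), p s' * κ x s') /
        (∑ s' ∈ Finset.univ.filter (fun s' => f s' = f s), p s')) (x : X) :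
    ∑ s, p s * (κ' x s * Real.log (κ' x s)) ≤ ∑ s, p s * (κ x s * Real.log (κ x s)) := by
  rw [← Finset.sum_fiberwise Finset.univ f (fun s => p s * (κ' x s * Real.log (κ' x s))),
      ← Finset.sum_fiberwise Finset.univ f (fun s => p s * (κ x s * Real.log (κ x s)))]
  apply Finset.sum_le_sum
  intro c _
  set B := Finset.univ.filter (fun s => f s = c) with hB
  have hconst : ∀ s ∈ B, κ' x s = (∑ s' ∈ B, p s' * κ x s') / (∑ s' ∈ B, p s') := by
    intro s hs
    have : f s = c := (Finset.mem_filter.1 hs).2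
    rw [hκ' x s, this]
  calc ∑ s ∈ B, p s * (κ' x s * Real.log (κ' x s))
      = (∑ s ∈ B, p s) * ((∑ s' ∈ B, p s' * κ x s') / (∑ s' ∈ B, p s') *
          Real.log ((∑ s' ∈ B, p s' * κ x s') / (∑ s' ∈ B, p s'))) := by
        rw [Finset.sum_mul]
        apply Finset.sum_congr rfl
        intro s hs; rw [hconst s hs]
    _ ≤ ∑ s ∈ B, p s * (κ x s * Real.log (κ x s)) :=
        jensen_mul_log B p (κ x) (fun s _ => hfull s) (fun s _ => hκ x s)

lemma marg_eq {S S' X : Type} [Fintype S] [Fintype S'] [Fintype X] [DecidableEq S']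
    (κ : X → S → ℝ) (f : S → S')
    (p : S → ℝ) (hfull : ∀ s, 0 < p s)
    (κ' : X → S → ℝ)
    (hκ' : ∀ x s, κ' x s =
      (∑ s' ∈ Finset.univ.filter (fun s' => f s' = f s), p s' * κ x s') /
        (∑ s' ∈ Finset.univ.filter (fun s' => f s' = f s), p s')) (x : X) :
    ∑ s, p s * κ' x s = ∑ s, p s * κ x s := by
  rw [← Finset.sum_fiberwise Finset.univ f (fun s => p s * κ' x s),
      ← Finset.sum_fiberwise Finset.univ f (fun s => p s * κ x s)]
  apply Finset.sum_congr rfl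
  intro c _
  set B := Finset.univ.filter (fun s => f s = c) with hB
  rcases B.eq_empty_or_nonempty with h | h
  · simp [h]
  have hD : 0 < ∑ s ∈ B, p s := Finset.sum_pos (fun s _ => hfull s) h
  have hconst : ∀ s ∈ B, κ' x s = (∑ s' ∈ B, p s' * κ x s') / (∑ s' ∈ B, p s') := by
    intro s hs
    have : f s = c := (Finset.mem_filter.1 hs).2
    rw [hκ' x s, this]
  calc ∑ s ∈ B, p s * κ' x s
      = (∑ s ∈ B, p s) * ((∑ s' ∈ B, p s' * κ x s') / (∑ s' ∈ B, p s')) := by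
        rw [Finset.sum_mul]; exact Finset.sum_congr rfl (fun s hs => by rw [hconst s hs])
    _ = ∑ s ∈ B, p s * κ x s := by field_simp

theorem markov_approx_less_capable {S S' X : Type}
    [Fintype S] [Fintype S'] [Fintype X] [DecidableEq S']
    (κ : X → S → ℝ) (hκ : IsChannel κ) (f : S → S')
    (p : S → ℝ) (hp : IsDist p) (hfull : ∀ s, 0 < p s)
    (κ' : X → S → ℝ)
    (hκ' : ∀ x s, κ' x s =
      (∑ s' ∈ Finset.univ.filter (fun s' => f s' = f s), p s' * κ x s') /
        (∑ s' ∈ Finset.univ.filter (fun s' => f s' = f s), p s')) :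
    mutualInfo p κ' ≤ mutualInfo p κ := by
  have hκ'nn : ∀ x s, 0 ≤ κ' x s := by
    intro x s
    rw [hκ' x s]
    apply div_nonneg
    · exact Finset.sum_nonneg (fun s' _ => mul_nonneg (hfull s').le (hκ.1 x s'))
    · exact Finset.sum_nonneg (fun s' _ => (hfull s').le)
  unfold mutualInfo
  rw [mi_rewrite p κ hfull hκ.1, mi_rewrite p κ' hfull hκ'nn]
  apply Finset.sum_le_sum
  intro x _
  rw [marg_eq κ f p hfull κ' hκ' x]
  have := key_step κ hκ.1 f p hfull κ' hκ' x
  linarith
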